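/- (Data processing for min-entropy under measurement) For a classical-quantum state rho_{XE} and any POVM measurement on E producing a classical outcome F, the classical min-entropy of the resulting joint distribution P_{XF} satisfies H_min(X|F)_P >= H_min(X|E)_rho, and the same holds for the epsilon-smooth versions. -/

import Mathlib

open Matrix ComplexOrder Kronecker Finset

/-- The trace norm `‖A‖₁ = tr √(AᴴA)` of a complex matrix. -/
noncomputable def traceNorm {n : Type*} [Fintype n] [DecidableEq n]
    (A : Matrix n n ℂ) : ℝ :=
  ((Matrix.posSemidef_conjTranspose_mul_self A).isHermitian.eigenvectorUnitary.1 *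
    diagonal ((fun r : ℝ => (r : ℂ)) ∘ (√·) ∘ (Matrix.posSemidef_conjTranspose_mul_self A).isHermitian.eigenvalues) *
    (star (Matrix.posSemidef_conjTranspose_mul_self A).isHermitian.eigenvectorUnitary :
      Matrix n n ℂ)).trace.re

/-- Quantum conditional min-entropy of a bipartite operator on `X ⊗ E`:
`H_min(X|E)_ρ = sup {λ : ∃ density operator σ_E, 2^{-λ}(1_X ⊗ σ_E) ≥ ρ}`. -/
noncomputable def HminQ {X E : Type*} [Fintype X] [DecidableEq X]
    [Fintype E] [DecidableEq E] (ρ : Matrix (X × E) (X × E) ℂ) : ℝ :=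
  sSup {l : ℝ | ∃ σ : Matrix E E ℂ, σ.PosSemidef ∧ σ.trace = 1 ∧
    ((((2 : ℝ) ^ (-l) : ℝ) : ℂ) • ((1 : Matrix X X ℂ) ⊗ₖ σ) - ρ).PosSemidef}

/-- Smooth quantum conditional min-entropy (smoothing over the trace-distance
`ε`-ball of sub-normalized positive operators). -/
noncomputable def HminQSmooth {X E : Type*} [Fintype X] [DecidableEq X]
    [Fintype E] [DecidableEq E] (ε : ℝ) (ρ : Matrix (X × E) (X × E) ℂ) : ℝ :=
  sSup {l : ℝ | ∃ ρ' : Matrix (X × E) (X × E) ℂ, ρ'.PosSemidef ∧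
    traceNorm (ρ' - ρ) ≤ ε ∧
    ∃ σ : Matrix E E ℂ, σ.PosSemidef ∧ σ.trace = 1 ∧
      ((((2 : ℝ) ^ (-l) : ℝ) : ℂ) • ((1 : Matrix X X ℂ) ⊗ₖ σ) - ρ').PosSemidef}

/-- Classical conditional min-entropy of a joint distribution:
`2^{-H_min(X|F)} = ∑_f max_x P(x,f)`. -/
noncomputable def HminCl {X F : Type*} [Fintype X] [Nonempty X] [Fintype F]
    (P : X → F → ℝ) : ℝ :=
  -Real.logb 2 (∑ f : F, (univ : Finset X).sup' univ_nonempty (fun x => P x f))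

/-- Smooth classical conditional min-entropy (smoothing over the L1 `ε`-ball of
sub-normalized distributions). -/
noncomputable def HminClSmooth {X F : Type*} [Fintype X] [Nonempty X] [Fintype F]
    (ε : ℝ) (P : X → F → ℝ) : ℝ :=
  sSup {l : ℝ | ∃ P' : X → F → ℝ, (∀ x f, 0 ≤ P' x f) ∧
    (∑ x : X, ∑ f : F, |P x f - P' x f| ≤ ε) ∧
    (∑ f : F, (univ : Finset X).sup' univ_nonempty (fun x => P' x f) ≤ (2 : ℝ) ^ (-l))}

namespace MEDP

open scoped MatrixOrder

variable {n : Type*} [Fintype n] [DecidableEq n]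

lemma sqrt_congr {A B : Matrix n n ℂ} (h : A = B) (hA : A.PosSemidef) (hB : B.PosSemidef) :
    CFC.sqrt A = CFC.sqrt B := by subst h; rfl

lemma traceNorm_eq_sqrt (A : Matrix n n ℂ) : traceNorm A = (CFC.sqrt (Aᴴ * A)).trace.re := by
  unfold traceNorm
  rw [CFC.sqrt_eq_real_sqrt _ (posSemidef_conjTranspose_mul_self A).nonneg, cfcₙ_eq_cfc,
    (posSemidef_conjTranspose_mul_self A).isHermitian.cfc_eq]
  rfl

lemma psd_trace_re_nonneg {A : Matrix n n ℂ} (hA : A.PosSemidef) : 0 ≤ A.trace.re := by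
  have : ∀ i, 0 ≤ (A i i).re := by
    intro i
    have h := hA.dotProduct_mulVec_nonneg (Pi.single i 1)
    have h2 : star (Pi.single i 1) ⬝ᵥ A *ᵥ Pi.single i 1 = A i i := by
      simp [dotProduct, mulVec, Pi.single_apply]
    rw [h2] at h
    exact (Complex.le_def.mp h).1
  simpa [Matrix.trace, Matrix.diag, Complex.re_sum] using Finset.sum_nonneg fun i _ => this i

lemma traceNorm_psd {A : Matrix n n ℂ} (hA : A.PosSemidef) : traceNorm A = A.trace.re := by
  rw [traceNorm_eq_sqrt, sqrt_congr (show Aᴴ * A = A ^ 2 by rw [hA.1, pow_two]) (Matrix.posSemidef_conjTranspose_mul_self A) (hA.pow 2),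
    CFC.sqrt_sq A hA.nonneg]

lemma traceNorm_neg (A : Matrix n n ℂ) : traceNorm (-A) = traceNorm A := by
  rw [traceNorm_eq_sqrt, traceNorm_eq_sqrt,
    sqrt_congr (show (-A)ᴴ * (-A) = Aᴴ * A by simp) (Matrix.posSemidef_conjTranspose_mul_self _)
      (Matrix.posSemidef_conjTranspose_mul_self A)]

lemma trace_mul_re_nonneg {A B : Matrix n n ℂ} (hA : A.PosSemidef) (hB : B.PosSemidef) :
    0 ≤ ((A * B).trace).re := by
  obtain ⟨C, rfl⟩ : ∃ C : Matrix n n ℂ, A = Cᴴ * C :=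
    ⟨CFC.sqrt A, by rw [(CFC.sqrt_nonneg A).posSemidef.1, CFC.sqrt_mul_sqrt_self A hA.nonneg]⟩
  rw [mul_assoc, Matrix.trace_mul_comm]
  exact psd_trace_re_nonneg (hB.mul_mul_conjTranspose_same C)

lemma psd_real_smul {A : Matrix n n ℂ} (hA : A.PosSemidef) {r : ℝ} (hr : 0 ≤ r) :
    (((r : ℂ)) • A).PosSemidef := by
  refine Matrix.PosSemidef.of_dotProduct_mulVec_nonneg ?_ fun v => ?_
  · unfold Matrix.IsHermitian
    rw [Matrix.conjTranspose_smul, hA.1, Complex.star_def, Complex.conj_ofReal]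
  · rw [Matrix.smul_mulVec, dotProduct_smul, smul_eq_mul]
    exact mul_nonneg (by exact_mod_cast Complex.zero_le_real.mpr hr) (hA.dotProduct_mulVec_nonneg v)

lemma psd_sum {ι : Type*} (s : Finset ι) (A : ι → Matrix n n ℂ)
    (h : ∀ i ∈ s, (A i).PosSemidef) : (∑ i ∈ s, A i).PosSemidef := by
  classical
  induction s using Finset.induction_on with
  | empty => simpa using Matrix.PosSemidef.zero
  | @insert a s ha ih =>
    rw [Finset.sum_insert ha]
    exact (h a (Finset.mem_insert_self a s)).add (ih fun i hi => h i (Finset.mem_insert_of_mem hi))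

variable {X E : Type*} [Fintype X] [DecidableEq X] [Fintype E] [DecidableEq E]

/-- Block diagonal matrix. -/
def bdiag (B : X → Matrix E E ℂ) : Matrix (X × E) (X × E) ℂ :=
  Matrix.of fun a b => if a.1 = b.1 then B a.1 a.2 b.2 else 0

lemma bdiag_isHermitian {B : X → Matrix E E ℂ} (h : ∀ x, (B x).IsHermitian) :
    (bdiag B).IsHermitian := by
  unfold Matrix.IsHermitian
  ext ⟨x, e⟩ ⟨x', e'⟩
  simp only [Matrix.conjTranspose_apply, bdiag, Matrix.of_apply]
  by_cases hxx : x = x'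
  · subst hxx
    rw [if_pos rfl, if_pos rfl]
    exact (h x).apply e e' 
  · rw [if_neg (fun h' => hxx h'.symm), if_neg hxx, star_zero]

lemma bdiag_posSemidef {B : X → Matrix E E ℂ} (h : ∀ x, (B x).PosSemidef) :
    (bdiag B).PosSemidef := by
  refine Matrix.PosSemidef.of_dotProduct_mulVec_nonneg (bdiag_isHermitian fun x => (h x).1) fun v => ?_
  have key : star v ⬝ᵥ (bdiag B) *ᵥ v
      = ∑ x : X, star (fun e => v (x, e)) ⬝ᵥ (B x) *ᵥ (fun e => v (x, e)) := by
    simp only [dotProduct, mulVec, bdiag, Matrix.of_apply, Pi.star_apply,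
      Fintype.sum_prod_type, mul_ite, ite_mul, zero_mul, mul_zero]
    refine Finset.sum_congr rfl fun x _ => Finset.sum_congr rfl fun e _ => ?_
    congr 1
    rw [Finset.sum_comm]
    simp [Finset.sum_ite_eq]
  rw [key]
  exact Finset.sum_nonneg fun x _ => (h x).dotProduct_mulVec_nonneg _

lemma trace_mul_bdiag (Δ : Matrix (X × E) (X × E) ℂ) (Nb : X → Matrix E E ℂ) :
    (Δ * bdiag Nb).trace = ∑ x : X, ((Δ.submatrix (Prod.mk x) (Prod.mk x)) * Nb x).trace := by
  simp only [Matrix.trace, Matrix.diag, Matrix.mul_apply, bdiag, Matrix.of_apply,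
    Matrix.submatrix_apply, Fintype.sum_prod_type, mul_ite, mul_zero]
  refine Finset.sum_congr rfl fun x _ => Finset.sum_congr rfl fun e _ => ?_
  rw [Finset.sum_comm]
  simp [Finset.sum_ite_eq']

set_option maxHeartbeats 1000000 in
lemma re_trace_mul_le_traceNorm {Δ N : Matrix n n ℂ} (hΔ : Δ.IsHermitian)
    (h1 : (1 - N).PosSemidef) (h2 : (1 + N).PosSemidef) :
    ((Δ * N).trace).re ≤ traceNorm Δ := by
  classical
  set U : Matrix n n ℂ := (hΔ.eigenvectorUnitary : Matrix n n ℂ) with hUdef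
  have hUU : Uᴴ * U = 1 := by
    simpa [Matrix.star_eq_conjTranspose] using
      Matrix.mem_unitaryGroup_iff'.mp hΔ.eigenvectorUnitary.2
  set lam : n → ℝ := hΔ.eigenvalues with hlam
  have hmul : ∀ f g : n → ℂ,
      (U * Matrix.diagonal f * Uᴴ) * (U * Matrix.diagonal g * Uᴴ)
        = U * Matrix.diagonal (f * g) * Uᴴ := by
    intro f g
    have h3 : Uᴴ * (U * Matrix.diagonal g * Uᴴ) = Matrix.diagonal g * Uᴴ := by
      rw [← mul_assoc, ← mul_assoc, hUU, one_mul]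
    rw [mul_assoc, h3, mul_assoc, ← mul_assoc (Matrix.diagonal f), Matrix.diagonal_mul_diagonal,
      ← mul_assoc]
    rfl
  have htr : ∀ f : n → ℂ, (U * Matrix.diagonal f * Uᴴ).trace = ∑ i, f i := by
    intro f
    rw [Matrix.trace_mul_cycle, hUU, one_mul, Matrix.trace_diagonal]
  have hpsdUDU : ∀ f : n → ℝ, (∀ i, 0 ≤ f i) →
      (U * Matrix.diagonal (fun i => (f i : ℂ)) * Uᴴ).PosSemidef := by
    intro f hf
    refine (Matrix.PosSemidef.diagonal ?_).mul_mul_conjTranspose_same U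
    intro i
    simpa using Complex.zero_le_real.mpr (hf i)
  set dp : n → ℝ := fun i => max (lam i) 0 with hdp
  set dm : n → ℝ := fun i => max (-lam i) 0 with hdm
  set Dp : Matrix n n ℂ := U * Matrix.diagonal (fun i => (dp i : ℂ)) * Uᴴ with hDp
  set Dm : Matrix n n ℂ := U * Matrix.diagonal (fun i => (dm i : ℂ)) * Uᴴ with hDm
  have hDpPSD : Dp.PosSemidef := hpsdUDU dp fun i => le_max_right _ _
  have hDmPSD : Dm.PosSemidef := hpsdUDU dm fun i => le_max_right _ _
  have hD0 : Δ = U * Matrix.diagonal (fun i => (lam i : ℂ)) * Uᴴ := by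
    have hst := hΔ.spectral_theorem
    rw [Unitary.conjStarAlgAut_apply, Matrix.star_eq_conjTranspose] at hst
    rw [hst]
    rfl
  have hdd : Matrix.diagonal (fun i => ((dp i : ℝ) : ℂ)) - Matrix.diagonal (fun i => ((dm i : ℝ) : ℂ))
      = Matrix.diagonal (fun i => ((lam i : ℝ) : ℂ)) := by
    rw [Matrix.diagonal_sub]
    refine congrArg Matrix.diagonal (funext fun i => ?_)
    show ((dp i : ℝ) : ℂ) - ((dm i : ℝ) : ℂ) = ((lam i : ℝ) : ℂ)
    norm_cast
    exact max_zero_sub_max_neg_zero_eq_self _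
  have hdecomp : Δ = Dp - Dm := by
    rw [hDp, hDm, ← Matrix.sub_mul, ← Matrix.mul_sub, hdd]
    exact hD0
  have hTN : traceNorm Δ = ∑ i, |lam i| := by
    set S : Matrix n n ℂ := U * Matrix.diagonal (fun i => ((|lam i| : ℝ) : ℂ)) * Uᴴ with hSdef
    have hSPSD : S.PosSemidef := hpsdUDU _ fun i => abs_nonneg _
    have habs2 : ((fun i => ((|lam i| : ℝ) : ℂ)) * (fun i => ((|lam i| : ℝ) : ℂ)) : n → ℂ)
        = ((fun i => ((lam i : ℝ) : ℂ)) * (fun i => ((lam i : ℝ) : ℂ)) : n → ℂ) := by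
      funext i
      show ((|lam i| : ℝ) : ℂ) * ((|lam i| : ℝ) : ℂ) = ((lam i : ℝ) : ℂ) * ((lam i : ℝ) : ℂ)
      norm_cast
      exact abs_mul_abs_self _
    have hsq : S ^ 2 = Δᴴ * Δ := by
      rw [pow_two, hΔ.eq, hSdef, hmul, habs2]
      nth_rewrite 1 [hD0]
      nth_rewrite 1 [hD0]
      rw [hmul]
    have hSeq : S = CFC.sqrt (Δᴴ * Δ) :=
      (CFC.sqrt_unique (by rw [← pow_two]; exact hsq) hSPSD.nonneg).symm
    rw [traceNorm_eq_sqrt, ← hSeq, hSdef, htr]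
    rw [show (∑ i, ((|lam i| : ℝ) : ℂ)) = ((∑ i, |lam i| : ℝ) : ℂ) by push_cast; ring]
    exact Complex.ofReal_re _
  have htrDp : Dp.trace.re = ∑ i, dp i := by
    rw [hDp, htr, show (∑ i, ((dp i : ℝ) : ℂ)) = ((∑ i, dp i : ℝ) : ℂ) by push_cast; ring]
    exact Complex.ofReal_re _
  have htrDm : Dm.trace.re = ∑ i, dm i := by
    rw [hDm, htr, show (∑ i, ((dm i : ℝ) : ℂ)) = ((∑ i, dm i : ℝ) : ℂ) by push_cast; ring]
    exact Complex.ofReal_re _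
  have hDpN : ((Dp * N).trace).re ≤ Dp.trace.re := by
    have h0 := trace_mul_re_nonneg hDpPSD h1
    rw [Matrix.mul_sub, mul_one, Matrix.trace_sub, Complex.sub_re] at h0
    linarith
  have hDmN : -Dm.trace.re ≤ ((Dm * N).trace).re := by
    have h0 := trace_mul_re_nonneg hDmPSD h2
    rw [Matrix.mul_add, mul_one, Matrix.trace_add, Complex.add_re] at h0
    linarith
  have habs : ∑ i, dp i + ∑ i, dm i = ∑ i, |lam i| := by
    rw [← Finset.sum_add_distrib]
    refine Finset.sum_congr rfl fun i _ => ?_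
    rw [hdp, hdm]
    exact max_zero_add_max_neg_zero_eq_abs_self _
  have hsplit : ((Δ * N).trace).re = ((Dp * N).trace).re - ((Dm * N).trace).re := by
    rw [hdecomp, Matrix.sub_mul, Matrix.trace_sub, Complex.sub_re]
  rw [hsplit, hTN]
  linarith

variable {F : Type*} [Fintype F] [DecidableEq F]

lemma trace_bdiag (B : X → Matrix E E ℂ) : (bdiag B).trace = ∑ x, (B x).trace := by
  simp [Matrix.trace, Matrix.diag, bdiag, Fintype.sum_prod_type]

lemma submatrix_bdiag (B : X → Matrix E E ℂ) (x : X) :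
    (bdiag B).submatrix (Prod.mk x) (Prod.mk x) = B x := by
  ext e e'
  simp [bdiag]

lemma bdiag_sub (A B : X → Matrix E E ℂ) :
    bdiag A - bdiag B = bdiag (fun x => A x - B x) := by
  ext ⟨x, e⟩ ⟨x', e'⟩
  by_cases h : x = x' <;> simp [bdiag, h]

lemma one_eq_bdiag : (1 : Matrix (X × E) (X × E) ℂ) = bdiag (fun _ => (1 : Matrix E E ℂ)) := by
  ext ⟨x, e⟩ ⟨x', e'⟩
  by_cases hx : x = x'
  · subst hx
    by_cases he : e = e' <;> simp [bdiag, Matrix.one_apply, he, Prod.ext_iff]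
  · simp [bdiag, Matrix.one_apply, hx, Prod.ext_iff]

lemma kron_one_eq_bdiag (σ : Matrix E E ℂ) :
    (1 : Matrix X X ℂ) ⊗ₖ σ = bdiag (fun _ => σ) := by
  ext ⟨x, e⟩ ⟨x', e'⟩
  by_cases hx : x = x' <;> simp [bdiag, Matrix.one_apply, hx]

lemma smul_sub_submatrix_psd {c : ℝ} {σ : Matrix E E ℂ} {ρ' : Matrix (X × E) (X × E) ℂ}
    (hpsd : (((c : ℝ) : ℂ) • ((1 : Matrix X X ℂ) ⊗ₖ σ) - ρ').PosSemidef) (x : X) :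
    (((c : ℝ) : ℂ) • σ - ρ'.submatrix (Prod.mk x) (Prod.mk x)).PosSemidef := by
  have h := hpsd.submatrix (Prod.mk x)
  have he : ((((c : ℝ) : ℂ)) • ((1 : Matrix X X ℂ) ⊗ₖ σ) - ρ').submatrix (Prod.mk x) (Prod.mk x)
      = (((c : ℝ) : ℂ)) • σ - ρ'.submatrix (Prod.mk x) (Prod.mk x) := by
    ext e e'
    simp [Matrix.one_apply]
  rwa [he] at h

lemma key_bound {c : ℝ} {σ : Matrix E E ℂ} {ρ' : Matrix (X × E) (X × E) ℂ} {Mf : Matrix E E ℂ}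
    (hMf : Mf.PosSemidef)
    (hpsd : (((c : ℝ) : ℂ) • ((1 : Matrix X X ℂ) ⊗ₖ σ) - ρ').PosSemidef) (x : X) :
    ((ρ'.submatrix (Prod.mk x) (Prod.mk x)) * Mf).trace.re ≤ c * ((σ * Mf).trace.re) := by
  have h0 := trace_mul_re_nonneg (smul_sub_submatrix_psd hpsd x) hMf
  rw [Matrix.sub_mul, Matrix.smul_mul, Matrix.trace_sub, Matrix.trace_smul, Complex.sub_re] at h0
  have h1 : ((((c : ℝ) : ℂ)) • (σ * Mf).trace).re = c * (σ * Mf).trace.re := by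
    rw [smul_eq_mul]
    exact Complex.re_ofReal_mul _ _
  rw [h1] at h0
  linarith

lemma smooth_mem [Nonempty X]
    (p : X → ℝ) (hp : ∀ x, 0 ≤ p x)
    (ρE : X → Matrix E E ℂ) (hρE : ∀ x, (ρE x).PosSemidef)
    (M : F → Matrix E E ℂ) (hM : ∀ f, (M f).PosSemidef) (hMsum : ∑ f : F, M f = 1)
    (l ε : ℝ)
    (ρ' : Matrix (X × E) (X × E) ℂ) (hρ' : ρ'.PosSemidef)
    (htn : traceNorm (ρ' - bdiag (fun x => ((p x : ℝ) : ℂ) • ρE x)) ≤ ε)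
    (σ : Matrix E E ℂ) (hσ : σ.PosSemidef) (hσtr : σ.trace = 1)
    (hop : ((((2 : ℝ) ^ (-l) : ℝ) : ℂ) • ((1 : Matrix X X ℂ) ⊗ₖ σ) - ρ').PosSemidef) :
    ∃ P' : X → F → ℝ, (∀ x f, 0 ≤ P' x f) ∧
      (∑ x : X, ∑ f : F, |p x * ((ρE x) * M f).trace.re - P' x f| ≤ ε) ∧
      (∑ f : F, (univ : Finset X).sup' univ_nonempty (fun x => P' x f) ≤ (2 : ℝ) ^ (-l)) := by
  classical
  set ρm : Matrix (X × E) (X × E) ℂ := bdiag (fun x => ((p x : ℝ) : ℂ) • ρE x) with hρm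
  set P' : X → F → ℝ :=
    fun x f => ((ρ'.submatrix (Prod.mk x) (Prod.mk x)) * M f).trace.re with hP'
  have hP'nn : ∀ x f, 0 ≤ P' x f :=
    fun x f => trace_mul_re_nonneg (hρ'.submatrix _) (hM f)
  -- the measured difference
  set Δ : Matrix (X × E) (X × E) ℂ := ρ' - ρm with hΔdef
  have hρmH : ρm.IsHermitian :=
    bdiag_isHermitian fun x => (psd_real_smul (hρE x) (hp x)).1
  have hΔH : Δ.IsHermitian := hρ'.1.sub hρmH
  have hblk : ∀ x, ρm.submatrix (Prod.mk x) (Prod.mk x) = ((p x : ℝ) : ℂ) • ρE x :=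
    fun x => submatrix_bdiag _ x
  have hPblk : ∀ x f, ((ρm.submatrix (Prod.mk x) (Prod.mk x)) * M f).trace.re
      = p x * ((ρE x) * M f).trace.re := by
    intro x f
    rw [hblk, Matrix.smul_mul, Matrix.trace_smul, smul_eq_mul, Complex.re_ofReal_mul]
  have hdiff : ∀ x f, p x * ((ρE x) * M f).trace.re - P' x f
      = -(((Δ.submatrix (Prod.mk x) (Prod.mk x)) * M f).trace.re) := by
    intro x f
    have hsub : Δ.submatrix (Prod.mk x) (Prod.mk x)
        = ρ'.submatrix (Prod.mk x) (Prod.mk x) - ρm.submatrix (Prod.mk x) (Prod.mk x) := by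
      ext e e'
      simp [hΔdef]
    rw [hsub, Matrix.sub_mul, Matrix.trace_sub, Complex.sub_re, hP']
    rw [← hPblk x f]
    ring
  refine ⟨P', hP'nn, ?_, ?_⟩
  · -- L1 bound via trace norm
    set s : X → F → ℝ := fun x f =>
      if 0 ≤ ((Δ.submatrix (Prod.mk x) (Prod.mk x)) * M f).trace.re then 1 else -1 with hs
    set Nb : X → Matrix E E ℂ := fun x => ∑ f : F, ((s x f : ℝ) : ℂ) • M f with hNb
    set N : Matrix (X × E) (X × E) ℂ := bdiag Nb with hN
    have hs1 : ∀ x f, 0 ≤ 1 - s x f := by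
      intro x f
      rw [hs]
      dsimp only
      split <;> norm_num
    have hs2 : ∀ x f, 0 ≤ 1 + s x f := by
      intro x f
      rw [hs]
      dsimp only
      split <;> norm_num
    have hone : (1 : Matrix (X × E) (X × E) ℂ) - N = bdiag (fun x => 1 - Nb x) := by
      rw [one_eq_bdiag, hN, bdiag_sub]
    have honeP : (1 : Matrix (X × E) (X × E) ℂ) + N = bdiag (fun x => 1 + Nb x) := by
      rw [one_eq_bdiag, hN]
      rw [show ∀ (A B : X → Matrix E E ℂ), bdiag A + bdiag B = bdiag (fun x => A x + B x) from ?_]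
      · intro A B
        ext ⟨x, e⟩ ⟨x', e'⟩
        by_cases h : x = x' <;> simp [bdiag, h]
    have hblock1 : ∀ x, ((1 : Matrix E E ℂ) - Nb x).PosSemidef := by
      intro x
      have : (1 : Matrix E E ℂ) - Nb x = ∑ f : F, ((1 - s x f : ℝ) : ℂ) • M f := by
        rw [hNb, ← hMsum, ← Finset.sum_sub_distrib]
        refine Finset.sum_congr rfl fun f _ => ?_
        push_cast
        rw [sub_smul, one_smul]
      rw [this]
      exact psd_sum _ _ fun f _ => psd_real_smul (hM f) (hs1 x f)
    have hblock2 : ∀ x, ((1 : Matrix E E ℂ) + Nb x).PosSemidef := by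
      intro x
      have : (1 : Matrix E E ℂ) + Nb x = ∑ f : F, ((1 + s x f : ℝ) : ℂ) • M f := by
        rw [hNb, ← hMsum, ← Finset.sum_add_distrib]
        refine Finset.sum_congr rfl fun f _ => ?_
        push_cast
        rw [add_smul, one_smul]
      rw [this]
      exact psd_sum _ _ fun f _ => psd_real_smul (hM f) (hs2 x f)
    have h1N : ((1 : Matrix (X × E) (X × E) ℂ) - N).PosSemidef := by
      rw [hone]; exact bdiag_posSemidef hblock1
    have h2N : ((1 : Matrix (X × E) (X × E) ℂ) + N).PosSemidef := by
      rw [honeP]; exact bdiag_posSemidef hblock2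
    have htrace : ((Δ * N).trace).re
        = ∑ x : X, ∑ f : F, |((Δ.submatrix (Prod.mk x) (Prod.mk x)) * M f).trace.re| := by
      rw [hN, trace_mul_bdiag, Complex.re_sum]
      refine Finset.sum_congr rfl fun x _ => ?_
      have hexp : (Δ.submatrix (Prod.mk x) (Prod.mk x)) * Nb x
          = ∑ f : F, ((s x f : ℝ) : ℂ) • ((Δ.submatrix (Prod.mk x) (Prod.mk x)) * M f) := by
        rw [hNb]
        dsimp only
        rw [Matrix.mul_sum]
        exact Finset.sum_congr rfl fun f _ => (mul_smul_comm _ _ _)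
      rw [hexp, Matrix.trace_sum, Complex.re_sum]
      refine Finset.sum_congr rfl fun f _ => ?_
      rw [Matrix.trace_smul, smul_eq_mul, Complex.re_ofReal_mul, hs]
      dsimp only
      split
      · rename_i h
        rw [one_mul, abs_of_nonneg h]
      · rename_i h
        push_neg at h
        rw [abs_of_neg h]
        ring
    calc ∑ x : X, ∑ f : F, |p x * ((ρE x) * M f).trace.re - P' x f|
        = ∑ x : X, ∑ f : F, |((Δ.submatrix (Prod.mk x) (Prod.mk x)) * M f).trace.re| := by
          refine Finset.sum_congr rfl fun x _ => Finset.sum_congr rfl fun f _ => ?_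
          rw [hdiff x f, abs_neg]
      _ = ((Δ * N).trace).re := htrace.symm
      _ ≤ traceNorm Δ := re_trace_mul_le_traceNorm hΔH h1N h2N
      _ ≤ ε := htn
  · -- sum over f of sup bound
    have hle : ∀ f x, P' x f ≤ (2 : ℝ) ^ (-l) * ((σ * M f).trace.re) :=
      fun f x => key_bound (hM f) hop x
    have hsum : ∑ f : F, ((σ * M f).trace.re) = 1 := by
      rw [← Complex.re_sum, ← Matrix.trace_sum, ← Matrix.mul_sum, hMsum, mul_one, hσtr]
      exact Complex.one_re
    calc ∑ f : F, (univ : Finset X).sup' univ_nonempty (fun x => P' x f)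
        ≤ ∑ f : F, (2 : ℝ) ^ (-l) * ((σ * M f).trace.re) :=
          Finset.sum_le_sum fun f _ => Finset.sup'_le _ _ fun x _ => hle f x
      _ = (2 : ℝ) ^ (-l) := by rw [← Finset.mul_sum, hsum, mul_one]

end MEDP

open MEDP

/-- Data processing for min-entropy under measurement. For a
classical-quantum state `ρ_{XE} = ∑_x p(x) |x⟩⟨x| ⊗ ρ_E^x` and any POVM
`{M_f}` on `E` producing the classical joint distribution
`P(x,f) = p(x) tr(ρ_E^x M_f)`, we have `H_min(X|F)_P ≥ H_min(X|E)_ρ`, and the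
same holds for the `ε`-smooth versions. -/
theorem min_entropy_data_processing
    {X E F : Type*} [Fintype X] [DecidableEq X] [Nonempty X]
    [Fintype E] [DecidableEq E] [Fintype F] [DecidableEq F]
    (p : X → ℝ) (hp : ∀ x, 0 ≤ p x) (hpsum : ∑ x : X, p x = 1)
    (ρE : X → Matrix E E ℂ)
    (hρE : ∀ x, (ρE x).PosSemidef) (hρEtr : ∀ x, (ρE x).trace = 1)
    (M : F → Matrix E E ℂ)
    (hM : ∀ f, (M f).PosSemidef) (hMsum : ∑ f : F, M f = 1) :
    HminQ (fun a b => if a.1 = b.1 then ((p a.1 : ℝ) : ℂ) * ρE a.1 a.2 b.2 else 0)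
        ≤ HminCl (fun x f => p x * ((ρE x) * M f).trace.re) ∧
    ∀ ε : ℝ, 0 ≤ ε →
      HminQSmooth ε
          (fun a b => if a.1 = b.1 then ((p a.1 : ℝ) : ℂ) * ρE a.1 a.2 b.2 else 0)
        ≤ HminClSmooth ε (fun x f => p x * ((ρE x) * M f).trace.re) := by
  classical
  have hρm : (fun a b => if a.1 = b.1 then ((p a.1 : ℝ) : ℂ) * ρE a.1 a.2 b.2 else 0)
      = bdiag (fun x => ((p x : ℝ) : ℂ) • ρE x) := by
    ext ⟨x, e⟩ ⟨x', e'⟩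
    by_cases h : x = x' <;> simp [MEDP.bdiag, h]
  rw [hρm]
  set ρm : Matrix (X × E) (X × E) ℂ := bdiag (fun x => ((p x : ℝ) : ℂ) • ρE x) with hρmdef
  set P : X → F → ℝ := fun x f => p x * ((ρE x) * M f).trace.re with hPdef
  have hρmPSD : ρm.PosSemidef := bdiag_posSemidef fun x => psd_real_smul (hρE x) (hp x)
  have hcoe : ∀ x : X, (((p x : ℝ) : ℂ) • ρE x).trace = ((p x : ℝ) : ℂ) := fun x => by
    rw [Matrix.trace_smul, hρEtr, smul_eq_mul, mul_one]
  have htrρm : ρm.trace = 1 := by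
    rw [hρmdef, trace_bdiag, Finset.sum_congr rfl fun x _ => hcoe x,
      show (∑ x : X, ((p x : ℝ) : ℂ)) = ((∑ x : X, p x : ℝ) : ℂ) by push_cast; ring, hpsum]
    norm_num
  have hPnn : ∀ x f, 0 ≤ P x f := fun x f =>
    mul_nonneg (hp x) (trace_mul_re_nonneg (hρE x) (hM f))
  have hsumtr : ∀ A : Matrix E E ℂ, ∑ f : F, (A * M f).trace = A.trace := by
    intro A
    rw [← Matrix.trace_sum, ← Matrix.mul_sum, hMsum, mul_one]
  have hProw : ∀ x, ∑ f : F, P x f = p x := by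
    intro x
    rw [hPdef]
    dsimp only
    rw [← Finset.mul_sum, ← Complex.re_sum, hsumtr, hρEtr, Complex.one_re, mul_one]
  have hPsum : ∑ x : X, ∑ f : F, P x f = 1 := by
    rw [Finset.sum_congr rfl fun x _ => hProw x, hpsum]
  obtain ⟨x0, hx0⟩ : ∃ x, 0 < p x := by
    by_contra h
    push_neg at h
    have h0 : ∑ x : X, p x = 0 := Finset.sum_eq_zero fun x _ => le_antisymm (h x) (hp x)
    rw [hpsum] at h0
    norm_num at h0
  set S : ℝ := ∑ f : F, (univ : Finset X).sup' univ_nonempty (fun x => P x f) with hSdef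
  have hS1 : S ≤ 1 := by
    rw [hSdef, ← hPsum, Finset.sum_comm]
    exact Finset.sum_le_sum fun f _ => Finset.sup'_le _ _ fun x _ =>
      Finset.single_le_sum (fun y _ => hPnn y f) (mem_univ x)
  have hS0 : 0 < S := by
    have hle : p x0 ≤ S := by
      rw [hSdef, ← hProw x0]
      exact Finset.sum_le_sum fun f _ => Finset.le_sup' (fun x => P x f) (mem_univ x0)
    linarith
  have hHminCl0 : 0 ≤ HminCl P := by
    show 0 ≤ -Real.logb 2 S
    have := Real.logb_nonpos one_lt_two hS0.le hS1
    linarith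
  have hPblk : ∀ x f, ((ρm.submatrix (Prod.mk x) (Prod.mk x)) * M f).trace.re = P x f := by
    intro x f
    rw [hρmdef, submatrix_bdiag, Matrix.smul_mul, Matrix.trace_smul, smul_eq_mul,
      Complex.re_ofReal_mul]
  have hsumtrRe : ∀ σ : Matrix E E ℂ, σ.trace = 1 → ∑ f : F, ((σ * M f).trace.re) = 1 := by
    intro σ hσtr
    rw [← Complex.re_sum, hsumtr, hσtr, Complex.one_re]
  constructor
  · -- non-smooth statement
    apply Real.sSup_le _ hHminCl0
    rintro l ⟨σ, hσ, hσtr, hpsd⟩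
    have hb : ∀ f x, P x f ≤ (2 : ℝ) ^ (-l) * ((σ * M f).trace.re) := by
      intro f x
      have hk := key_bound (hM f) hpsd x
      rw [hPblk x f] at hk
      exact hk
    have hS2 : S ≤ (2 : ℝ) ^ (-l) := by
      calc S ≤ ∑ f : F, (2 : ℝ) ^ (-l) * ((σ * M f).trace.re) :=
            Finset.sum_le_sum fun f _ => Finset.sup'_le _ _ fun x _ => hb f x
        _ = (2 : ℝ) ^ (-l) := by rw [← Finset.mul_sum, hsumtrRe σ hσtr, mul_one]
    have hlog : Real.logb 2 S ≤ Real.logb 2 ((2 : ℝ) ^ (-l)) :=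
      Real.logb_le_logb_of_le one_lt_two hS0 hS2
    rw [Real.logb_rpow (by norm_num) (by norm_num)] at hlog
    show l ≤ -Real.logb 2 S
    linarith
  · -- smooth statement
    intro ε hε
    set Cs : Set ℝ := {l : ℝ | ∃ P' : X → F → ℝ, (∀ x f, 0 ≤ P' x f) ∧
      (∑ x : X, ∑ f : F, |P x f - P' x f| ≤ ε) ∧
      (∑ f : F, (univ : Finset X).sup' univ_nonempty (fun x => P' x f) ≤ (2 : ℝ) ^ (-l))}
      with hCsdef
    set Qs : Set ℝ := {l : ℝ | ∃ ρ' : Matrix (X × E) (X × E) ℂ, ρ'.PosSemidef ∧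
      traceNorm (ρ' - ρm) ≤ ε ∧
      ∃ σ : Matrix E E ℂ, σ.PosSemidef ∧ σ.trace = 1 ∧
        ((((2 : ℝ) ^ (-l) : ℝ) : ℂ) • ((1 : Matrix X X ℂ) ⊗ₖ σ) - ρ').PosSemidef} with hQsdef
    show sSup Qs ≤ sSup Cs
    by_cases hC : BddAbove Cs
    · have h0C : (0 : ℝ) ∈ Cs := by
        refine ⟨P, hPnn, ?_, ?_⟩
        · simp [hε]
        · rw [neg_zero, Real.rpow_zero]
          exact hS1
      refine Real.sSup_le ?_ (le_csSup hC h0C)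
      rintro l ⟨ρ', hρ', htn, σ, hσ, hσtr, hop⟩
      exact le_csSup hC (smooth_mem p hp ρE hρE M hM hMsum l ε ρ' hρ' htn σ hσ hσtr hop)
    · rw [Real.sSup_of_not_bddAbove hC]
      have hcard : (0 : ℝ) < (Fintype.card X : ℝ) := by
        exact_mod_cast Fintype.card_pos
      have hε1 : (1 : ℝ) ≤ ε := by
        by_contra hlt
        push_neg at hlt
        set δ : ℝ := (1 - ε) / 2 with hδdef
        have hδ0 : 0 < δ := by rw [hδdef]; linarith
        obtain ⟨l, hlC, hlgt⟩ :=
          not_bddAbove_iff.mp hC (-Real.logb 2 (δ / (Fintype.card X : ℝ)))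
        obtain ⟨P', hP'nn, hP'l1, hP'sum⟩ := hlC
        have h2l : (2 : ℝ) ^ (-l) < δ / (Fintype.card X : ℝ) := by
          have h1 : (2 : ℝ) ^ (-l) < (2 : ℝ) ^ (Real.logb 2 (δ / (Fintype.card X : ℝ))) := by
            apply (Real.rpow_lt_rpow_left_iff one_lt_two).mpr
            linarith
          rwa [Real.rpow_logb two_pos (by norm_num) (by positivity)] at h1
        have hP'tot : ∑ x : X, ∑ f : F, P' x f ≤ (Fintype.card X : ℝ) * (2 : ℝ) ^ (-l) := by
          rw [Finset.sum_comm]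
          calc ∑ f : F, ∑ x : X, P' x f
              ≤ ∑ f : F, (Fintype.card X : ℝ) *
                  ((univ : Finset X).sup' univ_nonempty fun x => P' x f) := by
                refine Finset.sum_le_sum fun f _ => ?_
                have hc := Finset.sum_le_card_nsmul univ (fun x => P' x f)
                    ((univ : Finset X).sup' univ_nonempty fun x => P' x f)
                    (fun x _ => Finset.le_sup' (fun x => P' x f) (mem_univ x))
                simpa [Finset.card_univ, nsmul_eq_mul] using hc
            _ = (Fintype.card X : ℝ) *
                  ∑ f : F, ((univ : Finset X).sup' univ_nonempty fun x => P' x f) := by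
                rw [Finset.mul_sum]
            _ ≤ (Fintype.card X : ℝ) * (2 : ℝ) ^ (-l) :=
                mul_le_mul_of_nonneg_left hP'sum hcard.le
        have h1le : (1 : ℝ) ≤ ε + (Fintype.card X : ℝ) * (2 : ℝ) ^ (-l) := by
          calc (1 : ℝ) = ∑ x : X, ∑ f : F, P x f := hPsum.symm
            _ ≤ ∑ x : X, ∑ f : F, (|P x f - P' x f| + P' x f) := by
                refine Finset.sum_le_sum fun x _ => Finset.sum_le_sum fun f _ => ?_
                have := le_abs_self (P x f - P' x f)
                linarith
            _ = (∑ x : X, ∑ f : F, |P x f - P' x f|) + ∑ x : X, ∑ f : F, P' x f := by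
                rw [← Finset.sum_add_distrib]
                exact Finset.sum_congr rfl fun x _ => Finset.sum_add_distrib
            _ ≤ ε + (Fintype.card X : ℝ) * (2 : ℝ) ^ (-l) := add_le_add hP'l1 hP'tot
        have hfin : (Fintype.card X : ℝ) * (2 : ℝ) ^ (-l) < δ := by
          calc (Fintype.card X : ℝ) * (2 : ℝ) ^ (-l)
              < (Fintype.card X : ℝ) * (δ / (Fintype.card X : ℝ)) :=
                mul_lt_mul_of_pos_left h2l hcard
            _ = δ := by field_simp
        rw [hδdef] at hfin
        linarith
      have hQnb : ¬ BddAbove Qs := by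
        rintro ⟨b, hb⟩
        set σ0 : Matrix E E ℂ := ∑ x : X, ((p x : ℝ) : ℂ) • ρE x with hσ0def
        have hσ0psd : σ0.PosSemidef := psd_sum _ _ fun x _ => psd_real_smul (hρE x) (hp x)
        have hσ0tr : σ0.trace = 1 := by
          rw [hσ0def, Matrix.trace_sum, Finset.sum_congr rfl fun x _ => hcoe x,
            show (∑ x : X, ((p x : ℝ) : ℂ)) = ((∑ x : X, p x : ℝ) : ℂ) by push_cast; ring, hpsum]
          norm_num
        have hmem : max b 0 + 1 ∈ Qs := by
          refine ⟨0, Matrix.PosSemidef.zero, ?_, σ0, hσ0psd, hσ0tr, ?_⟩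
          · rw [zero_sub, traceNorm_neg, traceNorm_psd hρmPSD, htrρm]
            simpa using hε1
          · rw [sub_zero, kron_one_eq_bdiag]
            exact psd_real_smul (bdiag_posSemidef fun _ => hσ0psd)
              (Real.rpow_nonneg (by norm_num) _)
        have hble := hb hmem
        have : b < max b 0 + 1 := by
          have := le_max_left b 0
          linarith
        linarith
      rw [Real.sSup_of_not_bddAbove hQnb]
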